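/- Let W be a finite-dimensional vector space over ℂ of dimension w, and let V have dimension v. The map (i,j) ↦ (j∘i, Im j) induces a bijection from the set M(v,w) = {(i,j) ∈ Hom(W,V) × Hom(V,W) : i∘j = 0, j injective} modulo the GL(V)-action g·(i,j) = (g∘i, j∘g^{-1}), onto the variety F_{v,w} = {(t, V₀) : t ∈ End(W), V₀ ⊆ W a v-dimensional subspace, t² = 0, Im t ⊆ V₀ ⊆ ker t}. -/

import Mathlib

open Module LinearMap

variable (W V : Type) [AddCommGroup W] [Module ℂ W] [AddCommGroup V] [Module ℂ V]

/-- The space `M(v,w) = {(i,j) : i ∘ j = 0, j injective}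
⊆ Hom(W,V) × Hom(V,W)`. -/
def Mvw : Set ((W →ₗ[ℂ] V) × (V →ₗ[ℂ] W)) :=
  {p | p.1 ∘ₗ p.2 = 0 ∧ Function.Injective p.2}

/-- Two points of `M(v,w)` are equivalent iff they differ by the `GL(V)`-action
`g · (i, j) = (g ∘ i, j ∘ g⁻¹)`. -/
def glRel (p q : Mvw W V) : Prop :=
  ∃ g : V ≃ₗ[ℂ] V, q.val.1 = (g : V →ₗ[ℂ] V) ∘ₗ p.val.1 ∧
    q.val.2 = p.val.2 ∘ₗ (g.symm : V →ₗ[ℂ] V)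

/-- The variety `F_{v,w} = {(t, V₀) : t² = 0, Im t ⊆ V₀ ⊆ ker t, dim V₀ = v}`. -/
def Fvw (v : ℕ) : Set ((W →ₗ[ℂ] W) × Submodule ℂ W) :=
  {q | q.1 ∘ₗ q.1 = 0 ∧ range q.1 ≤ q.2 ∧ q.2 ≤ ker q.1 ∧ finrank ℂ q.2 = v}

/-- **The quiver variety `𝓜(v,w)` is the variety `F_{v,w}`.**
For finite-dimensional `ℂ`-vector spaces `V`, `W` of dimensions `v`, `w`, the
map `(i, j) ↦ (j ∘ i, Im j)` from `M(v,w)` lands in `F_{v,w}`, is surjective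
onto `F_{v,w}`, and identifies two points exactly when they lie in the same
`GL(V)`-orbit; hence it induces a bijection `M(v,w)/GL(V) ≃ F_{v,w}`. -/
theorem quiver_variety_iso_Fvw (v w : ℕ)
    [FiniteDimensional ℂ W] [FiniteDimensional ℂ V]
    (hW : finrank ℂ W = w) (hV : finrank ℂ V = v) :
    (∀ p : Mvw W V,
      (p.val.2 ∘ₗ p.val.1, range p.val.2) ∈ Fvw W v) ∧
    (∀ q ∈ Fvw W v, ∃ p : Mvw W V,
      (p.val.2 ∘ₗ p.val.1, range p.val.2) = q) ∧
    (∀ p p' : Mvw W V,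
      ((p.val.2 ∘ₗ p.val.1, range p.val.2) =
        (p'.val.2 ∘ₗ p'.val.1, range p'.val.2) ↔ glRel W V p p')) := by

  refine ⟨?_, ?_, ?_⟩
  · rintro ⟨⟨i, j⟩, hij, hj⟩
    have h0 : ∀ y, i (j y) = 0 := fun y => DFunLike.congr_fun hij y
    refine ⟨?_, ?_, ?_, ?_⟩
    · ext x; simp [h0]
    · exact range_comp_le_range _ _
    · rintro x ⟨y, rfl⟩
      show (j ∘ₗ i) (j y) = 0
      simp [h0]
    · rw [LinearMap.finrank_range_of_inj hj, hV]
  · rintro ⟨t, V₀⟩ ⟨ht2, hrt, htk, hd⟩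
    have hfr : finrank ℂ V = finrank ℂ V₀ := hV.trans hd.symm
    let e : V ≃ₗ[ℂ] V₀ := LinearEquiv.ofFinrankEq _ _ hfr
    let j : V →ₗ[ℂ] W := V₀.subtype ∘ₗ (e : V →ₗ[ℂ] V₀)
    let i : W →ₗ[ℂ] V := (e.symm : V₀ →ₗ[ℂ] V) ∘ₗ t.codRestrict V₀ (fun x => hrt ⟨x, rfl⟩)
    have hji : j ∘ₗ i = t := by
      ext x
      simp [i, j]
    have hij0 : i ∘ₗ j = 0 := by
      ext x
      have h1 : t ((e x : W)) = 0 := htk (e x).2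
      simp only [i, j, comp_apply, coe_comp, LinearEquiv.coe_coe, Submodule.coe_subtype,
        LinearMap.zero_apply, Function.comp_apply]
      have : (t.codRestrict V₀ (fun x => hrt ⟨x, rfl⟩)) ((e x : W)) = 0 :=
        Subtype.ext h1
      rw [this, map_zero]
    have hjinj : Function.Injective j :=
      (Submodule.injective_subtype V₀).comp e.injective
    have hrj : range j = V₀ := by
      rw [show j = V₀.subtype ∘ₗ (e : V →ₗ[ℂ] V₀) from rfl, range_comp,
        LinearEquiv.range, Submodule.map_top, Submodule.range_subtype]
    exact ⟨⟨(i, j), hij0, hjinj⟩, by simp [hji, hrj]⟩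
  · rintro ⟨⟨i, j⟩, hij, hj⟩ ⟨⟨i', j'⟩, hij', hj'⟩
    constructor
    · intro h
      have h1 : j ∘ₗ i = j' ∘ₗ i' := congrArg Prod.fst h
      have h2 : range j = range j' := congrArg Prod.snd h
      set e := LinearEquiv.ofInjective j hj with he
      set e' := LinearEquiv.ofInjective j' hj' with he'
      let g : V ≃ₗ[ℂ] V := e.trans ((LinearEquiv.ofEq _ _ h2).trans e'.symm)
      have hg : ∀ x, j' (g x) = j x := by
        intro x
        have : (e' (g x) : W) = j' (g x) := rfl
        rw [← this]
        show ((e' (e'.symm ((LinearEquiv.ofEq _ _ h2) (e x)))) : W) = j x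
        rw [e'.apply_symm_apply]
        rfl
      refine ⟨g, ?_, ?_⟩
      · ext x
        apply hj'
        show j' (i' x) = j' (g (i x))
        rw [hg]
        exact (DFunLike.congr_fun h1 x).symm
      · ext x
        show j' x = j (g.symm x)
        rw [← hg (g.symm x), g.apply_symm_apply]
    · rintro ⟨g, hg1, hg2⟩
      have hg1' : i' = (g : V →ₗ[ℂ] V) ∘ₗ i := hg1
      have hg2' : j' = j ∘ₗ (g.symm : V →ₗ[ℂ] V) := hg2
      have hfst : j ∘ₗ i = j' ∘ₗ i' := by
        rw [hg1', hg2']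
        ext x
        simp
      have hsnd : range j = range j' := by
        rw [hg2', range_comp, LinearEquiv.range, Submodule.map_top]
      exact Prod.ext hfst hsnd
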